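/- Let p be a prime and v₁, …, vₙ, v₊, v₋ ∈ ℤⁿ with v₊ = (0,…,0,1)ᵀ. If p divides every determinant det(v_{i₁},…,v_{i_{n-1}}, v₊) for every (n−1)-element subset {i₁,…,i_{n-1}} ⊂ {1,…,n}, and if the primitive vectors v′ᵢ obtained from the projections v̄ᵢ of vᵢ to ℤ^{n-1} satisfy that p does not divide gcd over all (n−1)-subsets of det(v′_{i₁},…,v′_{i_{n-1}}), then there exists i such that p divides every coordinate v_iʲ for j ≠ n. -/

import Mathlib

/-- The primitive integer vector with the same direction as `w` (equal to `0` when `w = 0`):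
divide `w` by the gcd of its entries. -/
def primVec {k : ℕ} (w : Fin k → ℤ) : Fin k → ℤ :=
  fun j => w j / ((Finset.univ.gcd fun i => (w i).natAbs : ℕ) : ℤ)

/-- Each entry of `w` is the gcd of the entries times the corresponding entry of `primVec w`. -/
lemma primVec_spec {k : ℕ} (w : Fin k → ℤ) (j : Fin k) :
    w j = ((Finset.univ.gcd fun i => (w i).natAbs : ℕ) : ℤ) * primVec w j := by
  have h : ((Finset.univ.gcd fun i => (w i).natAbs : ℕ) : ℤ) ∣ w j := by
    have := Finset.gcd_dvd (Finset.mem_univ j) (f := fun i => (w i).natAbs)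
    exact Int.dvd_natAbs.mp (Int.natCast_dvd_natCast.mpr this)
  exact (Int.mul_ediv_cancel' h).symm

/-- Let `p` be a prime and `v₁, …, vₙ, v₊, v₋ ∈ ℤⁿ` (here `n = m + 1`)
with `v₊ = (0, …, 0, 1)ᵀ`.  If `p` divides `det(v_{i₁}, …, v_{i_{n-1}}, v₊)` for every
`(n−1)`-element subset `{i₁, …, i_{n-1}} ⊂ {1, …, n}`, and if the primitive vectors `v′ᵢ`
obtained from the projections `v̄ᵢ` of the `vᵢ` to `ℤ^{n-1}` satisfy that `p` does not
divide the gcd over all `(n−1)`-subsets of `det(v′_{i₁}, …, v′_{i_{n-1}})`, then there is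
an `i` such that `p` divides every coordinate `v_iʲ` with `j ≠ n`. -/
theorem exists_vector_with_divisible_coords (m : ℕ) (p : ℕ) (hp : p.Prime)
    (v : Fin (m + 1) → (Fin (m + 1) → ℤ)) (vplus vminus : Fin (m + 1) → ℤ)
    (hplus : vplus = Pi.single (Fin.last m) 1)
    (H1 : ∀ i : Fin (m + 1),
      (p : ℤ) ∣ (Matrix.of fun r c : Fin (m + 1) =>
        (Fin.snoc (fun c' : Fin m => v (i.succAbove c')) vplus :
          Fin (m + 1) → Fin (m + 1) → ℤ) c r).det)
    (H2 : ¬ (p : ℤ) ∣ Finset.univ.gcd (fun i : Fin (m + 1) =>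
      (Matrix.of fun r c : Fin m =>
        primVec (fun s : Fin m => v (i.succAbove c) s.castSucc) r).det)) :
    ∃ i : Fin (m + 1), ∀ j : Fin (m + 1), j ≠ Fin.last m → (p : ℤ) ∣ v i j := by
  classical
  set g : Fin (m + 1) → ℕ :=
    fun k => Finset.univ.gcd fun s : Fin m => (v k s.castSucc).natAbs with hg
  have hpZ : Prime (p : ℤ) := Nat.prime_iff_prime_int.mp hp
  -- find i with p not dividing the primitive determinant
  obtain ⟨i, hi⟩ : ∃ i : Fin (m + 1), ¬ (p : ℤ) ∣
      (Matrix.of fun r c : Fin m =>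
        primVec (fun s : Fin m => v (i.succAbove c) s.castSucc) r).det := by
    by_contra h
    push_neg at h
    exact H2 (Finset.dvd_gcd fun i _ => h i)
  -- compute the big determinant
  have hdet : (Matrix.of fun r c : Fin (m + 1) =>
        (Fin.snoc (fun c' : Fin m => v (i.succAbove c')) vplus :
          Fin (m + 1) → Fin (m + 1) → ℤ) c r).det
      = (∏ c : Fin m, (g (i.succAbove c) : ℤ)) *
        (Matrix.of fun r c : Fin m =>
          primVec (fun s : Fin m => v (i.succAbove c) s.castSucc) r).det := by
    rw [Matrix.det_succ_column _ (Fin.last m)]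
    rw [Finset.sum_eq_single (Fin.last m)]
    · have hsub : ((Matrix.of fun r c : Fin (m + 1) =>
          (Fin.snoc (fun c' : Fin m => v (i.succAbove c')) vplus :
            Fin (m + 1) → Fin (m + 1) → ℤ) c r).submatrix
            (Fin.last m).succAbove (Fin.last m).succAbove)
          = Matrix.of fun r c : Fin m =>
              (g (i.succAbove c) : ℤ) *
                (Matrix.of fun r c : Fin m =>
                  primVec (fun s : Fin m => v (i.succAbove c) s.castSucc) r) r c := by
        ext r c
        simp only [Matrix.submatrix_apply, Matrix.of_apply, Fin.succAbove_last,
          Fin.snoc_castSucc]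
        exact primVec_spec (fun s : Fin m => v (i.succAbove c) s.castSucc) r
      rw [hsub, Matrix.det_mul_row]
      simp [hplus]
    · intro b _ hb
      have : (Fin.snoc (fun c' : Fin m => v (i.succAbove c')) vplus :
          Fin (m + 1) → Fin (m + 1) → ℤ) (Fin.last m) b = 0 := by
        simp [hplus, Pi.single_apply, hb]
      simp [this]
    · intro h; exact absurd (Finset.mem_univ _) h
  -- p divides the product of gcds
  have hprod : (p : ℤ) ∣ ∏ c : Fin m, (g (i.succAbove c) : ℤ) := by
    have := H1 i
    rw [hdet] at this
    rcases hpZ.dvd_mul.mp this with h | h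
    · exact h
    · exact absurd h hi
  obtain ⟨c, -, hc⟩ := (hpZ.dvd_finset_prod_iff _).mp hprod
  refine ⟨i.succAbove c, fun j hj => ?_⟩
  obtain ⟨s, rfl⟩ := Fin.exists_castSucc_eq.mpr hj
  have hdvd : ((g (i.succAbove c) : ℕ) : ℤ) ∣ v (i.succAbove c) s.castSucc := by
    rw [hg]
    have := Finset.gcd_dvd (Finset.mem_univ s)
      (f := fun s : Fin m => (v (i.succAbove c) s.castSucc).natAbs)
    exact Int.dvd_natAbs.mp (Int.natCast_dvd_natCast.mpr this)
  exact dvd_trans hc hdvd
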